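/- For w > 0, ∫_{-∞}^{∞} y²/((y²+1)(y²+w)²) dy = π/(2·√w·(√w+1)²). -/

import Mathlib

open Real MeasureTheory Filter Topology

lemma aux_tendsto (w : ℝ) (hw : 0 < w) (l : Filter ℝ) (hl : Tendsto abs l atTop) :
    Tendsto (fun y : ℝ => y / (y ^ 2 + w)) l (𝓝 0) := by
  apply squeeze_zero_norm' (a := fun y : ℝ => |y|⁻¹) ?_ hl.inv_tendsto_atTop
  filter_upwards [hl.eventually_ge_atTop 1] with y hy
  have h0 : (0:ℝ) < |y| := lt_of_lt_of_le one_pos hy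
  have h2 : (0:ℝ) < y ^ 2 + w := by positivity
  rw [Real.norm_eq_abs, abs_div, abs_of_pos h2, inv_eq_one_div, div_le_div_iff₀ h2 h0]
  nlinarith [sq_abs y]

lemma aux_tendsto2 (l : Filter ℝ) (hl : Tendsto abs l atTop) :
    Tendsto (fun y : ℝ => y / ((y ^ 2 + 1) ^ 2)) l (𝓝 0) := by
  apply squeeze_zero_norm' (a := fun y : ℝ => |y|⁻¹) ?_ hl.inv_tendsto_atTop
  filter_upwards [hl.eventually_ge_atTop 1] with y hy
  have h0 : (0:ℝ) < |y| := lt_of_lt_of_le one_pos hy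
  have h2 : (0:ℝ) < (y ^ 2 + 1) ^ 2 := by positivity
  rw [Real.norm_eq_abs, abs_div, abs_of_pos h2, inv_eq_one_div, div_le_div_iff₀ h2 h0]
  nlinarith [sq_abs y, sq_nonneg y, sq_nonneg (y^2)]

lemma integ (w : ℝ) (hw : 0 < w) :
    Integrable (fun y : ℝ => y ^ 2 / ((y ^ 2 + 1) * (y ^ 2 + w) ^ 2)) := by
  apply ((integrable_inv_one_add_sq.const_mul ((4 * w)⁻¹)).mono ?_ ?_)
  · apply Continuous.aestronglyMeasurable
    exact (continuous_pow 2).div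
      (((continuous_pow 2).add continuous_const).mul
        (((continuous_pow 2).add continuous_const).pow 2))
      (fun y => by positivity)
  · filter_upwards with y
    rw [Real.norm_eq_abs, Real.norm_eq_abs, abs_of_nonneg (by positivity),
      abs_of_nonneg (by positivity), div_le_iff₀ (by positivity), mul_comm, ← mul_assoc,
      ← div_eq_mul_inv, ← div_eq_mul_inv, div_div, le_div_iff₀ (by positivity)]
    nlinarith [sq_nonneg (y ^ 2 - w), sq_nonneg y]

set_option maxHeartbeats 1000000 in
lemma case_one : ∫ y : ℝ, y ^ 2 / ((y ^ 2 + 1) * (y ^ 2 + 1) ^ 2) = π / 8 := by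
  have hderiv : ∀ y : ℝ, HasDerivAt
      (fun y : ℝ => (1/8) * Real.arctan y + ((1/8) * (y / (y ^ 2 + 1))
        + (-(1/4)) * (y / ((y ^ 2 + 1) ^ 2))))
      (y ^ 2 / ((y ^ 2 + 1) * (y ^ 2 + 1) ^ 2)) y := by
    intro y
    have hy1 : (0:ℝ) < y ^ 2 + 1 := by positivity
    have d1 : HasDerivAt (fun y : ℝ => y ^ 2 + 1) (2 * y) y := by
      simpa using (hasDerivAt_pow 2 y).add_const 1
    have d2 : HasDerivAt (fun y : ℝ => y / (y ^ 2 + 1))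
        ((1 * (y ^ 2 + 1) - y * (2 * y)) / (y ^ 2 + 1) ^ 2) y :=
      (hasDerivAt_id y).div d1 hy1.ne'
    have d3 : HasDerivAt (fun y : ℝ => (y ^ 2 + 1) ^ 2) (2 * (y ^ 2 + 1) ^ 1 * (2 * y)) y :=
      d1.pow 2
    have d4 : HasDerivAt (fun y : ℝ => y / ((y ^ 2 + 1) ^ 2))
        ((1 * (y ^ 2 + 1) ^ 2 - y * (2 * (y ^ 2 + 1) ^ 1 * (2 * y))) / ((y ^ 2 + 1) ^ 2) ^ 2) y :=
      (hasDerivAt_id y).div d3 (by positivity)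
    have h := ((Real.hasDerivAt_arctan y).const_mul (1/8 : ℝ)).add
      ((d2.const_mul (1/8 : ℝ)).add (d4.const_mul (-(1/4) : ℝ)))
    have hv : (1/8 : ℝ) * (1 / (1 + y ^ 2)) +
        ((1/8 : ℝ) * ((1 * (y ^ 2 + 1) - y * (2 * y)) / (y ^ 2 + 1) ^ 2) +
          (-(1/4) : ℝ) * ((1 * (y ^ 2 + 1) ^ 2 - y * (2 * (y ^ 2 + 1) ^ 1 * (2 * y))) /
            ((y ^ 2 + 1) ^ 2) ^ 2)) = y ^ 2 / ((y ^ 2 + 1) * (y ^ 2 + 1) ^ 2) := by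
      field_simp
      ring
    rw [← hv]
    exact h
  have htop : Tendsto (fun y : ℝ => (1/8) * Real.arctan y + ((1/8) * (y / (y ^ 2 + 1))
        + (-(1/4)) * (y / ((y ^ 2 + 1) ^ 2)))) atTop
      (𝓝 ((1/8) * (π/2) + ((1/8) * 0 + (-(1/4)) * 0))) :=
    ((Real.tendsto_arctan_atTop.mono_right nhdsWithin_le_nhds).const_mul _).add
      (((aux_tendsto 1 one_pos atTop tendsto_abs_atTop_atTop).const_mul _).add
        ((aux_tendsto2 atTop tendsto_abs_atTop_atTop).const_mul _))
  have hbot : Tendsto (fun y : ℝ => (1/8) * Real.arctan y + ((1/8) * (y / (y ^ 2 + 1))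
        + (-(1/4)) * (y / ((y ^ 2 + 1) ^ 2)))) atBot
      (𝓝 ((1/8) * (-(π/2)) + ((1/8) * 0 + (-(1/4)) * 0))) :=
    ((Real.tendsto_arctan_atBot.mono_right nhdsWithin_le_nhds).const_mul _).add
      (((aux_tendsto 1 one_pos atBot tendsto_abs_atBot_atTop).const_mul _).add
        ((aux_tendsto2 atBot tendsto_abs_atBot_atTop).const_mul _))
  rw [integral_of_hasDerivAt_of_tendsto hderiv (integ 1 one_pos) hbot htop]
  ring

theorem stmt_5 (w : ℝ) (hw : 0 < w) :
    ∫ y : ℝ, y ^ 2 / ((y ^ 2 + 1) * (y ^ 2 + w) ^ 2) =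
      Real.pi / (2 * Real.sqrt w * (Real.sqrt w + 1) ^ 2) := by
  rcases eq_or_ne w 1 with rfl | h1
  · rw [Real.sqrt_one, case_one]
    ring
  · -- general case
    set s := Real.sqrt w with hsdef
    have hs : 0 < s := Real.sqrt_pos.mpr hw
    have hw2 : s ^ 2 = w := Real.sq_sqrt hw.le
    have hs1 : s ^ 2 - 1 ≠ 0 := by rw [hw2]; exact sub_ne_zero.mpr h1
    have hsp1 : s + 1 ≠ 0 := by positivity
    set a : ℝ := -1 / (s ^ 2 - 1) ^ 2 with ha
    set b : ℝ := (s ^ 2 + 1) / (2 * s * (s ^ 2 - 1) ^ 2) with hb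
    set c : ℝ := 1 / (2 * (s ^ 2 - 1)) with hc
    have hderiv : ∀ y : ℝ, HasDerivAt
        (fun y : ℝ => a * Real.arctan y + (b * Real.arctan (y / s)
          + c * (y / (y ^ 2 + w))))
        (y ^ 2 / ((y ^ 2 + 1) * (y ^ 2 + w) ^ 2)) y := by
      intro y
      have hy1 : (0:ℝ) < y ^ 2 + 1 := by positivity
      have hyw : (0:ℝ) < y ^ 2 + w := by positivity
      have d1 : HasDerivAt (fun y : ℝ => y ^ 2 + w) (2 * y) y := by
        simpa using (hasDerivAt_pow 2 y).add_const w
      have d2 : HasDerivAt (fun y : ℝ => Real.arctan (y / s))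
          ((1 / (1 + (y / s) ^ 2)) * (1 / s)) y := by
        have := (Real.hasDerivAt_arctan (y / s)).comp y ((hasDerivAt_id y).div_const s)
        simpa [Function.comp_def] using this
      have d3 : HasDerivAt (fun y : ℝ => y / (y ^ 2 + w))
          ((1 * (y ^ 2 + w) - y * (2 * y)) / (y ^ 2 + w) ^ 2) y :=
        (hasDerivAt_id y).div d1 hyw.ne'
      have h := ((Real.hasDerivAt_arctan y).const_mul a).add
        ((d2.const_mul b).add (d3.const_mul c))
      have hv : a * (1 / (1 + y ^ 2)) +
          (b * ((1 / (1 + (y / s) ^ 2)) * (1 / s)) +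
            c * ((1 * (y ^ 2 + w) - y * (2 * y)) / (y ^ 2 + w) ^ 2)) =
          y ^ 2 / ((y ^ 2 + 1) * (y ^ 2 + w) ^ 2) := by
        rw [ha, hb, hc, ← hw2]
        have hyw' : (0:ℝ) < y ^ 2 + s ^ 2 := by rw [hw2]; exact hyw
        field_simp
        ring
      rw [← hv]
      exact h
    have hdivtop : Tendsto (fun y : ℝ => y / s) atTop atTop :=
      Tendsto.atTop_div_const hs tendsto_id
    have hdivbot : Tendsto (fun y : ℝ => y / s) atBot atBot :=
      Tendsto.atBot_div_const hs tendsto_id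
    have harctop : Tendsto (fun y : ℝ => Real.arctan (y / s)) atTop (𝓝 (π / 2)) :=
      (Real.tendsto_arctan_atTop.mono_right nhdsWithin_le_nhds).comp hdivtop
    have harcbot : Tendsto (fun y : ℝ => Real.arctan (y / s)) atBot (𝓝 (-(π / 2))) :=
      (Real.tendsto_arctan_atBot.mono_right nhdsWithin_le_nhds).comp hdivbot
    have htop : Tendsto (fun y : ℝ => a * Real.arctan y + (b * Real.arctan (y / s)
          + c * (y / (y ^ 2 + w)))) atTop
        (𝓝 (a * (π / 2) + (b * (π / 2) + c * 0))) :=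
      ((Real.tendsto_arctan_atTop.mono_right nhdsWithin_le_nhds).const_mul _).add
        ((harctop.const_mul _).add
          ((aux_tendsto w hw atTop tendsto_abs_atTop_atTop).const_mul _))
    have hbot : Tendsto (fun y : ℝ => a * Real.arctan y + (b * Real.arctan (y / s)
          + c * (y / (y ^ 2 + w)))) atBot
        (𝓝 (a * (-(π / 2)) + (b * (-(π / 2)) + c * 0))) :=
      ((Real.tendsto_arctan_atBot.mono_right nhdsWithin_le_nhds).const_mul _).add
        ((harcbot.const_mul _).add
          ((aux_tendsto w hw atBot tendsto_abs_atBot_atTop).const_mul _))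
    rw [integral_of_hasDerivAt_of_tendsto hderiv (integ w hw) hbot htop]
    rw [ha, hb]
    field_simp
    ring
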